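/- Let Γ be a connected locally finite graph. Suppose the edges of Γ can be directed so that at all but finitely many vertices there is at most one outwardly directed edge. Then the fundamental group of Γ is finitely generated (Γ has finite rank). -/

import Mathlib

open SimpleGraph

private lemma sym2_head_ne_getLast {α : Type*} {l : List α} (h : l.Nodup)
    (hl : 2 ≤ l.length) (h1 : l ≠ []) : l.head h1 ≠ l.getLast h1 := by
  cases l with
  | nil => simp at h1
  | cons a rest =>
    have hrest : rest ≠ [] := by
      intro hr; subst hr; simp at hl
    have hmem : (a :: rest).getLast h1 ∈ rest := by
      rw [List.getLast_cons hrest]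
      exact List.getLast_mem hrest
    have : a ∉ rest := (List.nodup_cons.mp h).1
    intro he
    rw [List.head_cons] at he
    exact this (he ▸ hmem)

/-- Goldstein–Turner observation: if the edges of a connected locally finite graph can
be directed so that at all but finitely many vertices there is at most one outwardly
directed edge, then the graph has finite rank: removing a finite set of edges yields a
connected acyclic graph (a spanning tree), i.e. the fundamental group is finitely
generated. -/
theorem finite_rank_of_almost_flow {V : Type*} (G : SimpleGraph V)
    (hconn : G.Connected)
    (hlf : ∀ v : V, (G.neighborSet v).Finite)
    (dir : G.edgeSet → V × V)
    (hdir : ∀ e : G.edgeSet, s((dir e).1, (dir e).2) = (e : Sym2 V))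
    (hfin : {v : V | ∃ e₁ e₂ : G.edgeSet, e₁ ≠ e₂ ∧ (dir e₁).1 = v ∧ (dir e₂).1 = v}.Finite) :
    ∃ s : Set (Sym2 V), s.Finite ∧ (G.deleteEdges s).Connected ∧
      (G.deleteEdges s).IsAcyclic := by
  classical
  obtain ⟨r⟩ := hconn.nonempty
  set B : Set V := {v : V | ∃ e₁ e₂ : G.edgeSet, e₁ ≠ e₂ ∧ (dir e₁).1 = v ∧ (dir e₂).1 = v}
    with hBdef
  -- the tail function on abstract edges
  have htl_ex : ∀ x : Sym2 V, ∃ t : V, ∀ h : x ∈ G.edgeSet, t = (dir ⟨x, h⟩).1 := by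
    intro x
    by_cases h : x ∈ G.edgeSet
    · exact ⟨(dir ⟨x, h⟩).1, fun h' => rfl⟩
    · exact ⟨r, fun h' => absurd h' h⟩
  choose tl htl using htl_ex
  have htl_mem : ∀ (x) (h : x ∈ G.edgeSet), tl x ∈ x := by
    intro x h
    have key : ∀ e : G.edgeSet, (dir e).1 ∈ (e : Sym2 V) := by
      intro e
      rw [← hdir e]
      exact Sym2.mem_mk_left _ _
    rw [htl x h]
    exact key ⟨x, h⟩
  have huniq : ∀ x y, x ∈ G.edgeSet → y ∈ G.edgeSet → x ≠ y → tl x = tl y → tl x ∈ B := by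
    intro x y hx hy hne he
    refine ⟨⟨x, hx⟩, ⟨y, hy⟩, fun hc => hne (congrArg Subtype.val hc), (htl x hx).symm, ?_⟩
    rw [← htl y hy, ← he]
  -- the parent function
  have hpar_ex : ∀ v, v ≠ r → ∃ w, G.Adj v w ∧ G.dist w r + 1 = G.dist v r := by
    intro v hv
    obtain ⟨p, hp⟩ := (hconn v r).exists_walk_length_eq_dist
    cases p with
    | nil => exact absurd rfl hv
    | @cons _ w _ h q =>
      refine ⟨w, h, le_antisymm ?_ ?_⟩
      · have h1 : G.dist w r ≤ q.length := dist_le q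
        have h2 : q.length + 1 = G.dist v r := by simpa using hp
        omega
      · have h3 : G.dist v w ≤ 1 := by
          simpa using dist_le (Walk.cons h Walk.nil)
        have h4 : G.dist v r ≤ G.dist v w + G.dist w r := hconn.dist_triangle
        omega
  have hpar_ex' : ∀ v, ∃ w, v ≠ r → G.Adj v w ∧ G.dist w r + 1 = G.dist v r := by
    intro v
    by_cases h : v = r
    · exact ⟨r, fun hc => absurd h hc⟩
    · exact (hpar_ex v h).imp fun w hw _ => hw
  choose par hpar using hpar_ex'
  have hdist_r : G.dist r r = 0 := by simp
  -- iterate lemmas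
  have hiter_dist : ∀ (i) (u : V), i ≤ G.dist u r → G.dist (par^[i] u) r + i = G.dist u r := by
    intro i
    induction i with
    | zero => intro u _; simp
    | succ n ih =>
      intro u hu
      have hur : u ≠ r := by rintro rfl; omega
      have h1 := (hpar u hur).2
      rw [Function.iterate_succ_apply]
      have h2 := ih (par u) (by omega)
      omega
  have hiter_r : ∀ (n) (u : V), G.dist u r = n → par^[n] u = r := by
    intro n
    induction n with
    | zero =>
      intro u hu
      exact (hconn u r).dist_eq_zero_iff.mp hu
    | succ n ih =>
      intro u hu
      have hur : u ≠ r := by rintro rfl; omega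
      rw [Function.iterate_succ_apply]
      exact ih (par u) (by have := (hpar u hur).2; omega)
  have hwinj : ∀ (u : V) (i j : ℕ), i ≤ G.dist u r → j ≤ G.dist u r →
      par^[i] u = par^[j] u → i = j := by
    intro u i j hi hj he
    have h1 := hiter_dist i u hi
    have h2 := hiter_dist j u hj
    rw [he] at h1
    omega
  set B' : Set V := B ∪ {r} with hB'def
  have hB'fin : B'.Finite := hfin.union (Set.finite_singleton r)
  have hex : ∀ u : V, ∃ i, par^[i] u ∈ B' := by
    intro u
    exact ⟨G.dist u r, by rw [hiter_r _ u rfl]; exact Or.inr rfl⟩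
  set k : V → ℕ := fun u => Nat.find (hex u) with hkdef
  have hkB' : ∀ u, par^[k u] u ∈ B' := fun u => Nat.find_spec (hex u)
  have hkmin : ∀ u i, i < k u → par^[i] u ∉ B' := fun u i hi => Nat.find_min (hex u) hi
  have hkle : ∀ u, k u ≤ G.dist u r := fun u =>
    Nat.find_le (by rw [hiter_r _ u rfl]; exact Or.inr rfl)
  -- tree edges
  set P : Set (Sym2 V) := {x | ∃ v, v ≠ r ∧ x = s(v, par v)} with hPdef
  set qe : V → Sym2 V := fun v => s(v, par v) with hqedef
  have hqe_mem : ∀ v, v ≠ r → qe v ∈ G.edgeSet := fun v hv => (hpar v hv).1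
  have hqe_P : ∀ v, v ≠ r → qe v ∈ P := fun v hv => ⟨v, hv, rfl⟩
  have hqe_tl : ∀ v, v ≠ r → tl (qe v) = v ∨ tl (qe v) = par v := by
    intro v hv
    have := htl_mem (qe v) (hqe_mem v hv)
    rwa [hqedef, Sym2.mem_iff] at this
  -- the chain lemma
  have hchain : ∀ (u : V) (e : Sym2 V), e ∈ G.edgeSet → e ∉ P → tl e = u →
      ∀ i, i < k u → tl (qe (par^[i] u)) = par^[i + 1] u := by
    intro u e he heP htle i
    induction i with
    | zero =>
      intro h0
      have hu : u ∉ B' := by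
        have := hkmin u 0 h0
        simpa using this
      have hur : u ≠ r := fun h => hu (Or.inr h)
      rcases hqe_tl u hur with h | h
      · exfalso
        have hne : qe u ≠ e := fun hh => heP (hh ▸ hqe_P u hur)
        have := huniq (qe u) e (hqe_mem u hur) he hne (by rw [h, htle])
        rw [h] at this
        exact hu (Or.inl this)
      · simpa using h
    | succ n ih =>
      intro hn
      have hn' : n < k u := by omega
      have ihh := ih hn'
      have hkd : k u ≤ G.dist u r := hkle u
      have hw1 : par^[n + 1] u ∉ B' := hkmin u (n + 1) hn
      have hw1r : par^[n + 1] u ≠ r := fun h => hw1 (Or.inr h)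
      have hwnr : par^[n] u ≠ r := fun h => hkmin u n hn' (Or.inr h)
      have hne : qe (par^[n + 1] u) ≠ qe (par^[n] u) := by
        intro hh
        rw [hqedef] at hh
        simp only at hh
        rw [← Function.iterate_succ_apply' par (n + 1) u,
          ← Function.iterate_succ_apply' par n u] at hh
        rcases Sym2.eq_iff.mp hh with ⟨h1, _⟩ | ⟨_, h2⟩
        · have := hwinj u (n + 1) n (by omega) (by omega) h1
          omega
        · have := hwinj u (n + 2) n (by omega) (by omega) h2
          omega
      rcases hqe_tl _ hw1r with h | h
      · exfalso
        have := huniq _ _ (hqe_mem _ hw1r) (hqe_mem _ hwnr) hne (by rw [h, ihh])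
        rw [h] at this
        exact hw1 (Or.inl this)
      · rw [h, ← Function.iterate_succ_apply' par (n + 1) u]
  -- the finiteness of the non-tree edges
  set ψ : Sym2 V → Sym2 V := fun x =>
    if k (tl x) = 0 then x else qe (par^[k (tl x) - 1] (tl x)) with hψdef
  have hψ_spec : ∀ x ∈ G.edgeSet \ P, ψ x ∈ G.edgeSet ∧ tl (ψ x) ∈ B' := by
    rintro x ⟨hx, hxP⟩
    by_cases h0 : k (tl x) = 0
    · rw [hψdef]
      simp only [h0, if_true]
      refine ⟨hx, ?_⟩
      have := hkB' (tl x)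
      rwa [h0, Function.iterate_zero_apply] at this
    · rw [hψdef]
      simp only [h0, if_false]
      have hlt : k (tl x) - 1 < k (tl x) := by omega
      have hnr : par^[k (tl x) - 1] (tl x) ≠ r := fun h => hkmin _ _ hlt (Or.inr h)
      refine ⟨hqe_mem _ hnr, ?_⟩
      rw [hchain (tl x) x hx hxP rfl _ hlt]
      have : k (tl x) - 1 + 1 = k (tl x) := by omega
      rw [this]
      exact hkB' (tl x)
  -- injectivity
  have hdesc : ∀ x y, x ∈ G.edgeSet \ P → y ∈ G.edgeSet \ P → ψ x = ψ y →
      k (tl x) ≤ k (tl y) → x = y := by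
    rintro x y ⟨hx, hxP⟩ ⟨hy, hyP⟩ hψeq hkle'
    by_cases h0 : k (tl x) = 0
    · by_cases h0' : k (tl y) = 0
      · rw [hψdef] at hψeq
        simpa [h0, h0'] using hψeq
      · exfalso
        rw [hψdef] at hψeq
        simp only [h0, h0', if_true, if_false] at hψeq
        have hlt : k (tl y) - 1 < k (tl y) := by omega
        have hnr : par^[k (tl y) - 1] (tl y) ≠ r := fun h => hkmin _ _ hlt (Or.inr h)
        exact hxP (hψeq ▸ hqe_P _ hnr)
    · have h0' : k (tl y) ≠ 0 := by omega
      obtain ⟨a, ha⟩ : ∃ a, k (tl x) = a + 1 := ⟨k (tl x) - 1, by omega⟩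
      obtain ⟨b, hb⟩ : ∃ b, k (tl y) = b + 1 := ⟨k (tl y) - 1, by omega⟩
      have hab : a ≤ b := by omega
      set u := tl x with hu
      set u' := tl y with hu'
      have hcx : ∀ i, i < k u → tl (qe (par^[i] u)) = par^[i + 1] u :=
        hchain u x hx hxP rfl
      have hcy : ∀ i, i < k u' → tl (qe (par^[i] u')) = par^[i + 1] u' :=
        hchain u' y hy hyP rfl
      rw [hψdef] at hψeq
      simp only [h0, h0', if_false] at hψeq
      rw [← hu, ← hu', ha, hb] at hψeq
      simp only [Nat.add_sub_cancel] at hψeq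
      -- descent
      have claim : ∀ j, j ≤ a → par^[a - j] u = par^[b - j] u' := by
        intro j
        induction j with
        | zero =>
          intro _
          simp only [Nat.sub_zero]
          have hqx : qe (par^[a] u) = s(par^[a] u, par^[a + 1] u) := by
            rw [hqedef]
            simp only
            rw [← Function.iterate_succ_apply' par a u]
          have hqy : qe (par^[b] u') = s(par^[b] u', par^[b + 1] u') := by
            rw [hqedef]
            simp only
            rw [← Function.iterate_succ_apply' par b u']
          rw [hqx, hqy] at hψeq
          rcases Sym2.eq_iff.mp hψeq with ⟨h1, _⟩ | ⟨h1, _⟩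
          · exact h1
          · exfalso
            have hmem : par^[b + 1] u' ∈ B' := by rw [← hb]; exact hkB' u'
            have : par^[a] u ∉ B' := hkmin u a (by omega)
            rw [h1] at this
            exact this hmem
        | succ n ih =>
          intro hna
          have hnb : n + 1 ≤ b := by omega
          have hx0 : par^[a - n] u = par^[b - n] u' := ih (by omega)
          have hix : a - (n + 1) < k u := by omega
          have hiy : b - (n + 1) < k u' := by omega
          have e1 : a - (n + 1) + 1 = a - n := by omega
          have e2 : b - (n + 1) + 1 = b - n := by omega
          have t1 : tl (qe (par^[a - (n + 1)] u)) = par^[a - n] u := by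
            rw [hcx _ hix, e1]
          have t2 : tl (qe (par^[b - (n + 1)] u')) = par^[a - n] u := by
            rw [hcy _ hiy, e2, ← hx0]
          have hnB : par^[a - n] u ∉ B' := hkmin u (a - n) (by omega)
          have hnrx : par^[a - (n + 1)] u ≠ r := fun h => hkmin u _ (by omega : a - (n+1) < k u) (Or.inr h)
          have hnry : par^[b - (n + 1)] u' ≠ r := fun h => hkmin u' _ (by omega : b - (n+1) < k u') (Or.inr h)
          have heq : qe (par^[a - (n + 1)] u) = qe (par^[b - (n + 1)] u') := by
            by_contra hne
            have := huniq _ _ (hqe_mem _ hnrx) (hqe_mem _ hnry) hne (by rw [t1, t2])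
            rw [t1] at this
            exact hnB (Or.inl this)
          -- extract first components
          have hq1 : qe (par^[a - (n + 1)] u) = s(par^[a - (n + 1)] u, par^[a - n] u) := by
            rw [hqedef]
            simp only
            rw [← e1, ← Function.iterate_succ_apply' par (a - (n + 1)) u]
          have hq2 : qe (par^[b - (n + 1)] u') = s(par^[b - (n + 1)] u', par^[b - n] u') := by
            rw [hqedef]
            simp only
            rw [← e2, ← Function.iterate_succ_apply' par (b - (n + 1)) u']
          rw [hq1, hq2, ← hx0] at heq
          rcases Sym2.eq_iff.mp heq with ⟨h1, _⟩ | ⟨h1, h2⟩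
          · exact h1
          · exfalso
            have := hwinj u (a - (n + 1)) (a - n) (by have := hkle u; omega)
              (by have := hkle u; omega) h1
            omega
      have hfinal : u = par^[b - a] u' := by
        have := claim a le_rfl
        simpa using this
      by_cases hba : a = b
      · subst hba
        have huu : u = u' := by simpa using hfinal
        by_contra hne
        have := huniq x y hx hy hne (by rw [← hu, ← hu', huu])
        rw [← hu] at this
        have hu0 : u ∉ B' := by
          have := hkmin u 0 (by omega)
          simpa using this
        exact hu0 (Or.inl this)
      · exfalso
        have hblt : b - a - 1 < k u' := by omega
        have e3 : b - a - 1 + 1 = b - a := by omega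
        have t3 : tl (qe (par^[b - a - 1] u')) = u := by
          rw [hcy _ hblt, e3, ← hfinal]
        have hnry : par^[b - a - 1] u' ≠ r := fun h => hkmin u' _ hblt (Or.inr h)
        have hne : x ≠ qe (par^[b - a - 1] u') := fun hh => hxP (hh ▸ hqe_P _ hnry)
        have := huniq x _ hx (hqe_mem _ hnry) hne (by rw [t3, ← hu])
        rw [← hu] at this
        have hu0 : u ∉ B' := by
          have := hkmin u 0 (by omega)
          simpa using this
        exact hu0 (Or.inl this)
  have hinj : Set.InjOn ψ (G.edgeSet \ P) := by
    intro x hx y hy he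
    rcases le_total (k (tl x)) (k (tl y)) with h | h
    · exact hdesc x y hx hy he h
    · exact (hdesc y x hy hx he.symm h).symm
  -- incidence sets are finite
  have hinc : ∀ v : V, {x : Sym2 V | x ∈ G.edgeSet ∧ v ∈ x}.Finite := by
    intro v
    refine ((hlf v).image (fun w => s(v, w))).subset ?_
    rintro x ⟨hx, hv⟩
    refine ⟨Sym2.Mem.other hv, ?_, Sym2.other_spec hv⟩
    rw [SimpleGraph.mem_neighborSet, ← SimpleGraph.mem_edgeSet]
    rwa [Sym2.other_spec hv]
  have hF'fin : {x : Sym2 V | x ∈ G.edgeSet ∧ tl x ∈ B'}.Finite := by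
    refine (Set.Finite.biUnion hB'fin (fun v _ => hinc v)).subset ?_
    rintro x ⟨hx, hB'⟩
    exact Set.mem_biUnion hB' ⟨hx, htl_mem x hx⟩
  have hsfin : (G.edgeSet \ P).Finite := by
    refine Set.Finite.of_finite_image ?_ hinj
    refine hF'fin.subset ?_
    rintro _ ⟨x, hx, rfl⟩
    exact ⟨(hψ_spec x hx).1, (hψ_spec x hx).2⟩
  -- conclusion
  refine ⟨G.edgeSet \ P, hsfin, ?_, ?_⟩
  · -- connectivity
    have hT1 : ∀ v, v ≠ r → (G.deleteEdges (G.edgeSet \ P)).Adj v (par v) := by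
      intro v hv
      rw [SimpleGraph.deleteEdges_adj]
      exact ⟨(hpar v hv).1, fun hc => hc.2 (hqe_P v hv)⟩
    have hreach : ∀ (n) (u : V), G.dist u r ≤ n →
        (G.deleteEdges (G.edgeSet \ P)).Reachable u r := by
      intro n
      induction n with
      | zero =>
        intro u hu
        have : u = r := (hconn u r).dist_eq_zero_iff.mp (Nat.le_zero.mp hu)
        subst this
        rfl
      | succ n ih =>
        intro u hu
        by_cases h : u = r
        · subst h; rfl
        · exact ((hT1 u h).reachable).trans
            (ih (par u) (by have := (hpar u h).2; omega))
    haveI : Nonempty V := ⟨r⟩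
    exact SimpleGraph.Connected.mk (fun a b => (hreach _ a le_rfl).trans (hreach _ b le_rfl).symm)
  · -- acyclicity
    set T := G.deleteEdges (G.edgeSet \ P) with hTdef
    have hT2 : ∀ a b, T.Adj a b → (a ≠ r ∧ b = par a) ∨ (b ≠ r ∧ a = par b) := by
      intro a b hab
      rw [hTdef, SimpleGraph.deleteEdges_adj] at hab
      obtain ⟨hadj, hmem⟩ := hab
      have hP : s(a, b) ∈ P := by
        by_contra h
        exact hmem ⟨hadj, h⟩
      obtain ⟨v, hv, hveq⟩ := hP
      rcases Sym2.eq_iff.mp hveq with ⟨h1, h2⟩ | ⟨h1, h2⟩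
      · subst h1; exact Or.inl ⟨hv, h2⟩
      · subst h2; exact Or.inr ⟨hv, h1⟩
    intro v c hc
    -- pick a support vertex of maximal distance
    have hsupne : c.support.toFinset.Nonempty := by
      rw [List.toFinset_nonempty_iff]
      exact c.support_ne_nil
    obtain ⟨u, humem, humax⟩ := c.support.toFinset.exists_max_image
      (fun x => G.dist x r) hsupne
    rw [List.mem_toFinset] at humem
    set c' := c.rotate u humem with hc'def
    have hc' : c'.IsCycle := hc.rotate humem
    have hmax' : ∀ x ∈ c'.support, G.dist x r ≤ G.dist u r := by
      intro x hx
      rw [c'.support_eq_cons] at hx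
      rcases List.mem_cons.mp hx with h | h
      · subst h; exact le_rfl
      · have hperm := c.support_rotate u humem
        have : x ∈ c.support.tail := hperm.mem_iff.mp h
        have : x ∈ c.support := List.mem_of_mem_tail this
        exact humax x (List.mem_toFinset.mpr this)
    have hdne : c'.darts ≠ [] := by
      intro h
      have h3 := hc'.three_le_length
      have := c'.length_darts
      rw [h] at this
      simp at this
      omega
    set d1 := c'.darts.head hdne with hd1def
    set d2 := c'.darts.getLast hdne with hd2def
    have hd1f : d1.fst = u := by rw [hd1def, SimpleGraph.Walk.head_darts_eq_firstDart]; rfl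
    have hd2s : d2.snd = u := by rw [hd2def, SimpleGraph.Walk.getLast_darts_eq_lastDart]; rfl
    have hd1adj : T.Adj u d1.snd := hd1f ▸ d1.adj
    have hd2adj : T.Adj d2.fst u := hd2s ▸ d2.adj
    have hd1mem : d1.snd ∈ c'.support :=
      c'.dart_snd_mem_support_of_mem_darts (List.head_mem hdne)
    have hd2mem : d2.fst ∈ c'.support :=
      c'.dart_fst_mem_support_of_mem_darts (List.getLast_mem hdne)
    have hur : u ≠ r ∧ d1.snd = par u := by
      rcases hT2 u d1.snd hd1adj with h | h
      · exact h
      · exfalso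
        obtain ⟨hsr, hupar⟩ := h
        have hdd := (hpar d1.snd hsr).2
        rw [← hupar] at hdd
        have := hmax' d1.snd hd1mem
        omega
    have hur2 : d2.fst = par u := by
      rcases hT2 d2.fst u hd2adj with h | h
      · exfalso
        obtain ⟨hfr, hupar⟩ := h
        have hdd := (hpar d2.fst hfr).2
        rw [← hupar] at hdd
        have := hmax' d2.fst hd2mem
        omega
      · exact h.2
    -- the first and last edges coincide
    have he1 : d1.edge = s(d1.fst, d1.snd) := rfl
    have he2 : d2.edge = s(d2.fst, d2.snd) := rfl
    have hedge : d1.edge = d2.edge := by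
      rw [he1, he2, hd1f, hd2s, hur.2, hur2]
      exact Sym2.eq_swap
    have hnodup : c'.edges.Nodup := hc'.edges_nodup
    have hene : c'.edges ≠ [] := by
      intro h
      have hl := c'.length_edges
      rw [h] at hl
      have := hc'.three_le_length
      simp at hl
      omega
    have hedef : c'.edges = c'.darts.map SimpleGraph.Dart.edge := rfl
    have hhead : c'.edges.head hene = d1.edge := by
      rw [hd1def]
      simp only [hedef]
      rw [List.head_map]
    have hlast : c'.edges.getLast hene = d2.edge := by
      rw [hd2def]
      simp only [hedef]
      rw [List.getLast_map]
    refine sym2_head_ne_getLast hnodup ?_ hene ?_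
    · have hl := c'.length_edges
      have := hc'.three_le_length
      omega
    · rw [hhead, hlast, hedge]
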